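/- Let k ∈ ℕ and let f : [a,b] → ℝ be of class C^{k+1}. Suppose f(t) ≠ 0 for all t ∈ (a,b), and that f has a zero of order exactly i at a and of order exactly j at b, with 1 ≤ i ≤ k and 1 ≤ j ≤ k (i.e. f^{(m)}(a) = 0 for 0 ≤ m < i, f^{(i)}(a) ≠ 0, and f^{(m)}(b) = 0 for 0 ≤ m < j, f^{(j)}(b) ≠ 0). Then there exists ε > 0 such that every function h : [a,b] → ℝ of class C^{k+1} which has a zero of order exactly i at a and of order exactly j at b, and which satisfies sup_{t∈[a,b]} |h^{(m)}(t) − f^{(m)}(t)| < ε for all 0 ≤ m ≤ k+1, has no zeros in (a,b). -/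

import Mathlib

open Set
open scoped Nat

private lemma iterDW_congr_set {n : ℕ} {f : ℝ → ℝ} {s t : Set ℝ} {x : ℝ} (h : s =ᶠ[nhds x] t) :
    iteratedDerivWithin n f s x = iteratedDerivWithin n f t x := by
  simp only [iteratedDerivWithin, iteratedFDerivWithin_congr_set h]

private lemma taylor_lagrange_right {f : ℝ → ℝ} {x x₀ : ℝ} {n : ℕ} (hx : x < x₀)
    (hf : ContDiffOn ℝ n f (Icc x x₀))
    (hf' : DifferentiableOn ℝ (iteratedDerivWithin n f (Icc x x₀)) (Ioo x x₀)) :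
    ∃ x' ∈ Ioo x x₀, f x - taylorWithinEval f n (Icc x x₀) x₀ x =
      iteratedDerivWithin (n + 1) f (Icc x x₀) x' * (x - x₀) ^ (n + 1) / (n + 1)! := by
  rcases exists_ratio_hasDerivAt_eq_ratio_slope
      (fun t => taylorWithinEval f n (Icc x x₀) t x)
      (fun t => ((n ! : ℝ)⁻¹ * (x - t) ^ n) • iteratedDerivWithin (n + 1) f (Icc x x₀) t) hx
      (continuousOn_taylorWithinEval (uniqueDiffOn_Icc hx) hf)
      (fun t ht => taylorWithinEval_hasDerivAt_Ioo x hx ht hf hf')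
      (fun t => (x - t) ^ (n + 1))
      (fun t => -(n + 1) * (x - t) ^ n)
      (by fun_prop)
      (fun t _ => monomial_has_deriv_aux t x _) with ⟨y, hy, h⟩
  refine ⟨y, hy, ?_⟩
  simp only [taylorWithinEval_self, sub_self, zero_pow (Nat.succ_ne_zero n), smul_eq_mul] at h
  have hxy : (x - y) ^ n ≠ 0 := pow_ne_zero _ (sub_ne_zero.2 hy.1.ne)
  have h'' : ((x - x₀) ^ (n + 1) * ((n ! : ℝ)⁻¹ * iteratedDerivWithin (n + 1) f (Icc x x₀) y))
      * (x - y) ^ n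
      = ((taylorWithinEval f n (Icc x x₀) x₀ x - f x) * (-(n + 1))) * (x - y) ^ n := by
    linear_combination h
  have h' := mul_right_cancel₀ hxy h''
  have hfac : ((n + 1)! : ℝ) ≠ 0 := by positivity
  rw [eq_div_iff hfac]
  have hn : ((n ! : ℝ)) ≠ 0 := by positivity
  field_simp at h'
  push_cast [Nat.factorial_succ]
  linear_combination -h'

private lemma left_factor {K i : ℕ} {a b x : ℝ} {u : ℝ → ℝ}
    (hu : ContDiffOn ℝ (K + 1) u (Icc a b)) (hi1 : 1 ≤ i) (hiK : i ≤ K)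
    (hva : ∀ m < i, iteratedDerivWithin m u (Icc a b) a = 0)
    (hax : a < x) (hxb : x ≤ b) :
    ∃ ξ ∈ Ioo a x, u x = iteratedDerivWithin i u (Icc a b) ξ * (x - a) ^ i / i ! := by
  obtain ⟨n, rfl⟩ : ∃ n, i = n + 1 := ⟨i - 1, (Nat.succ_pred_eq_of_pos hi1).symm⟩
  have hsub : Icc a x ⊆ Icc a b := Icc_subset_Icc le_rfl hxb
  have hun : ContDiffOn ℝ (n + 1 : ℕ) u (Icc a x) :=
    (hu.of_le (by exact_mod_cast hiK.trans (Nat.le_succ K))).mono hsub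
  have hcd : ContDiffOn ℝ n u (Icc a x) := hun.of_le (by exact_mod_cast Nat.le_succ n)
  have hdiff : DifferentiableOn ℝ (iteratedDerivWithin n u (Icc a x)) (Ioo a x) :=
    (hun.differentiableOn_iteratedDerivWithin (by exact_mod_cast Nat.lt_succ_self n)
      (uniqueDiffOn_Icc hax)).mono Ioo_subset_Icc_self
  obtain ⟨ξ, hξ, heq⟩ : ∃ x' ∈ Ioo a x, u x - taylorWithinEval u n (Icc a x) a x =
      iteratedDerivWithin (n + 1) u (Icc a x) x' * (x - a) ^ (n + 1) / (n + 1)! := by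
    have := taylor_mean_remainder_lagrange (x₀ := a) (x := x) hax.ne
      (by rwa [uIcc_of_le hax.le]) (by rwa [uIcc_of_le hax.le, uIoo_of_le hax.le])
    rwa [uIcc_of_le hax.le, uIoo_of_le hax.le] at this
  have hset : Icc a x =ᶠ[nhds a] Icc a b := by
    rw [Filter.eventuallyEq_set]
    filter_upwards [Iio_mem_nhds hax] with y hy
    simp only [mem_Icc]
    exact ⟨fun ⟨h1, h2⟩ => ⟨h1, h2.trans hxb⟩, fun ⟨h1, _⟩ => ⟨h1, hy.le⟩⟩
  have htay : taylorWithinEval u n (Icc a x) a x = 0 := by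
    rw [taylor_within_apply]
    apply Finset.sum_eq_zero
    intro m hm
    rw [Finset.mem_range] at hm
    rw [iterDW_congr_set hset, hva m hm, smul_zero]
  have hξset : Icc a x =ᶠ[nhds ξ] Icc a b := by
    rw [Filter.eventuallyEq_set]
    filter_upwards [isOpen_Ioo.mem_nhds hξ] with y hy
    simp only [mem_Icc]
    exact ⟨fun ⟨h1, h2⟩ => ⟨h1, h2.trans hxb⟩, fun _ => ⟨hy.1.le, hy.2.le⟩⟩
  rw [htay, sub_zero] at heq
  exact ⟨ξ, hξ, by rw [heq, iterDW_congr_set hξset]⟩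

private lemma right_factor {K j : ℕ} {a b x : ℝ} {u : ℝ → ℝ}
    (hu : ContDiffOn ℝ (K + 1) u (Icc a b)) (hj1 : 1 ≤ j) (hjK : j ≤ K)
    (hvb : ∀ m < j, iteratedDerivWithin m u (Icc a b) b = 0)
    (hax : a ≤ x) (hxb : x < b) :
    ∃ ξ ∈ Ioo x b, u x = iteratedDerivWithin j u (Icc a b) ξ * (x - b) ^ j / j ! := by
  obtain ⟨n, rfl⟩ : ∃ n, j = n + 1 := ⟨j - 1, (Nat.succ_pred_eq_of_pos hj1).symm⟩
  have hsub : Icc x b ⊆ Icc a b := Icc_subset_Icc hax le_rfl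
  have hun : ContDiffOn ℝ (n + 1 : ℕ) u (Icc x b) :=
    (hu.of_le (by exact_mod_cast hjK.trans (Nat.le_succ K))).mono hsub
  have hcd : ContDiffOn ℝ n u (Icc x b) := hun.of_le (by exact_mod_cast Nat.le_succ n)
  have hdiff : DifferentiableOn ℝ (iteratedDerivWithin n u (Icc x b)) (Ioo x b) :=
    (hun.differentiableOn_iteratedDerivWithin (by exact_mod_cast Nat.lt_succ_self n)
      (uniqueDiffOn_Icc hxb)).mono Ioo_subset_Icc_self
  obtain ⟨ξ, hξ, heq⟩ := taylor_lagrange_right hxb hcd hdiff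
  have hset : Icc x b =ᶠ[nhds b] Icc a b := by
    rw [Filter.eventuallyEq_set]
    filter_upwards [Ioi_mem_nhds hxb] with y hy
    simp only [mem_Icc]
    exact ⟨fun ⟨_, h2⟩ => ⟨hax.trans hy.le, h2⟩, fun ⟨_, h2⟩ => ⟨hy.le, h2⟩⟩
  have htay : taylorWithinEval u n (Icc x b) b x = 0 := by
    rw [taylor_within_apply]
    apply Finset.sum_eq_zero
    intro m hm
    rw [Finset.mem_range] at hm
    rw [iterDW_congr_set hset, hvb m hm, smul_zero]
  have hξset : Icc x b =ᶠ[nhds ξ] Icc a b := by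
    rw [Filter.eventuallyEq_set]
    filter_upwards [isOpen_Ioo.mem_nhds hξ] with y hy
    simp only [mem_Icc]
    exact ⟨fun ⟨h1, h2⟩ => ⟨hax.trans h1, h2⟩, fun _ => ⟨hy.1.le, hy.2.le⟩⟩
  rw [htay, sub_zero] at heq
  exact ⟨ξ, hξ, by rw [heq, iterDW_congr_set hξset]⟩

/-- Stability of the nonvanishing of a `C^{k+1}` function on `(a,b)` under `C^{k+1}`-small
perturbations with zeroes of the same exact orders at the endpoints. -/
theorem no_interior_zeros_of_small_perturbation
    {k : ℕ} {a b : ℝ} (hab : a < b) (f : ℝ → ℝ)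
    (hf : ContDiffOn ℝ (k + 1) f (Icc a b))
    (i j : ℕ) (hi1 : 1 ≤ i) (hik : i ≤ k) (hj1 : 1 ≤ j) (hjk : j ≤ k)
    (hfa : ∀ m < i, iteratedDerivWithin m f (Icc a b) a = 0)
    (hfa' : iteratedDerivWithin i f (Icc a b) a ≠ 0)
    (hfb : ∀ m < j, iteratedDerivWithin m f (Icc a b) b = 0)
    (hfb' : iteratedDerivWithin j f (Icc a b) b ≠ 0)
    (hfne : ∀ t ∈ Ioo a b, f t ≠ 0) :
    ∃ ε > 0, ∀ h : ℝ → ℝ, ContDiffOn ℝ (k + 1) h (Icc a b) →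
      (∀ m < i, iteratedDerivWithin m h (Icc a b) a = 0) →
      iteratedDerivWithin i h (Icc a b) a ≠ 0 →
      (∀ m < j, iteratedDerivWithin m h (Icc a b) b = 0) →
      iteratedDerivWithin j h (Icc a b) b ≠ 0 →
      (∀ m ≤ k + 1, ∀ t ∈ Icc a b,
        |iteratedDerivWithin m h (Icc a b) t - iteratedDerivWithin m f (Icc a b) t| < ε) →
      ∀ t ∈ Ioo a b, h t ≠ 0 := by
  have hud := uniqueDiffOn_Icc hab
  have haI : a ∈ Icc a b := ⟨le_refl a, hab.le⟩
  have hbI : b ∈ Icc a b := ⟨hab.le, le_refl b⟩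
  set Da := iteratedDerivWithin i f (Icc a b) with hDadef
  set Db := iteratedDerivWithin j f (Icc a b) with hDbdef
  have hik1 : i ≤ k + 1 := hik.trans (Nat.le_succ k)
  have hjk1 : j ≤ k + 1 := hjk.trans (Nat.le_succ k)
  have hDa : ContinuousOn Da (Icc a b) :=
    hf.continuousOn_iteratedDerivWithin (by exact_mod_cast hik1) hud
  have hDb : ContinuousOn Db (Icc a b) :=
    hf.continuousOn_iteratedDerivWithin (by exact_mod_cast hjk1) hud
  have hDa0 : 0 < |Da a| := abs_pos.2 hfa'
  have hDb0 : 0 < |Db b| := abs_pos.2 hfb'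
  have hea : ∀ᶠ s in nhdsWithin a (Icc a b), |Da a| / 2 < |Da s| :=
    ((hDa a haI).abs).eventually (eventually_gt_nhds (by linarith))
  have heb : ∀ᶠ s in nhdsWithin b (Icc a b), |Db b| / 2 < |Db s| :=
    ((hDb b hbI).abs).eventually (eventually_gt_nhds (by linarith))
  obtain ⟨δa, hδa0, hsuba⟩ := Metric.mem_nhdsWithin_iff.1 hea
  obtain ⟨δb, hδb0, hsubb⟩ := Metric.mem_nhdsWithin_iff.1 heb
  have hballa : ∀ s ∈ Icc a b, dist s a < δa → |Da a| / 2 < |Da s| :=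
    fun s hs hd => hsuba ⟨Metric.mem_ball.2 hd, hs⟩
  have hballb : ∀ s ∈ Icc a b, dist s b < δb → |Db b| / 2 < |Db s| :=
    fun s hs hd => hsubb ⟨Metric.mem_ball.2 hd, hs⟩
  set a' := min (a + δa / 2) ((a + b) / 2) with ha'def
  set b' := max (b - δb / 2) ((a + b) / 2) with hb'def
  have haa' : a < a' := lt_min (by linarith) (by linarith)
  have ha'da : a' ≤ a + δa / 2 := min_le_left _ _
  have hb'db : b - δb / 2 ≤ b' := le_max_left _ _
  have ha'b' : a' ≤ b' := (min_le_right _ _).trans (le_max_right _ _)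
  have hb'b : b' < b := max_lt (by linarith) (by linarith)
  have hsubI : Icc a' b' ⊆ Ioo a b := fun s hs => ⟨haa'.trans_le hs.1, lt_of_le_of_lt hs.2 hb'b⟩
  obtain ⟨t0, ht0, hmin⟩ := isCompact_Icc.exists_isMinOn (nonempty_Icc.2 ha'b')
    ((hf.continuousOn.mono fun s hs => Ioo_subset_Icc_self (hsubI hs)).abs)
  have hm0 : 0 < |f t0| := abs_pos.2 (hfne t0 (hsubI ht0))
  refine ⟨min (min (|Da a| / 2) (|Db b| / 2)) |f t0|,
    lt_min (lt_min (half_pos hDa0) (half_pos hDb0)) hm0, ?_⟩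
  intro h hh hha _ hhb _ hsup t ht
  set ε := min (min (|Da a| / 2) (|Db b| / 2)) |f t0| with hεdef
  have hu : ContDiffOn ℝ (k + 1) (h - f) (Icc a b) := hh.sub hf
  have husub : ∀ m : ℕ, m ≤ k + 1 → ∀ s ∈ Icc a b, iteratedDerivWithin m (h - f) (Icc a b) s
      = iteratedDerivWithin m h (Icc a b) s - iteratedDerivWithin m f (Icc a b) s := by
    intro m hm s hs
    exact iteratedDerivWithin_sub hs hud ((hh.of_le (by exact_mod_cast hm)) s hs)
      ((hf.of_le (by exact_mod_cast hm)) s hs)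
  have hubound : ∀ m : ℕ, m ≤ k + 1 → ∀ s ∈ Icc a b,
      |iteratedDerivWithin m (h - f) (Icc a b) s| < ε := by
    intro m hm s hs
    rw [husub m hm s hs]
    exact hsup m hm s hs
  have hua : ∀ m < i, iteratedDerivWithin m (h - f) (Icc a b) a = 0 := by
    intro m hm
    rw [husub m (hm.le.trans hik1) a haI, hha m hm, hfa m hm, sub_zero]
  have hub : ∀ m < j, iteratedDerivWithin m (h - f) (Icc a b) b = 0 := by
    intro m hm
    rw [husub m (hm.le.trans hjk1) b hbI, hhb m hm, hfb m hm, sub_zero]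
  have key : |h t - f t| < |f t| := by
    rcases le_or_gt t a' with hta' | hta'
    · -- left region
      obtain ⟨ξ, hξ, hfeq⟩ := left_factor hf hi1 hik hfa ht.1 ht.2.le
      obtain ⟨η, hη, hueq⟩ := left_factor hu hi1 hik hua ht.1 ht.2.le
      have hξI : ξ ∈ Icc a b := ⟨hξ.1.le, hξ.2.le.trans ht.2.le⟩
      have hηI : η ∈ Icc a b := ⟨hη.1.le, hη.2.le.trans ht.2.le⟩
      have hpow : (0:ℝ) < (t - a) ^ i / i ! := by
        have : (0:ℝ) < t - a := by linarith [ht.1]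
        positivity
      have hfl : |Da a| / 2 * ((t - a) ^ i / i !) ≤ |f t| := by
        rw [hfeq, abs_div, abs_mul, abs_pow, abs_of_nonneg (sub_nonneg.2 ht.1.le),
          Nat.abs_cast, mul_div_assoc]
        refine mul_le_mul_of_nonneg_right ?_ (by positivity)
        refine (hballa ξ hξI ?_).le
        rw [Real.dist_eq, abs_of_nonneg (sub_nonneg.2 hξ.1.le)]
        have h1 : ξ < t := hξ.2
        linarith
      have hul : |h t - f t| < |Da a| / 2 * ((t - a) ^ i / i !) := by
        have h1 : h t - f t = (h - f) t := rfl
        rw [h1, hueq, abs_div, abs_mul, abs_pow, abs_of_nonneg (sub_nonneg.2 ht.1.le),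
          Nat.abs_cast, mul_div_assoc]
        refine mul_lt_mul_of_pos_right ?_ hpow
        exact lt_of_lt_of_le (hubound i hik1 η hηI)
          (le_trans (min_le_left _ _) (min_le_left _ _))
      linarith
    · rcases le_or_gt b' t with htb' | htb'
      · -- right region
        obtain ⟨ξ, hξ, hfeq⟩ := right_factor hf hj1 hjk hfb ht.1.le ht.2
        obtain ⟨η, hη, hueq⟩ := right_factor hu hj1 hjk hub ht.1.le ht.2
        have hξI : ξ ∈ Icc a b := ⟨ht.1.le.trans hξ.1.le, hξ.2.le⟩
        have hηI : η ∈ Icc a b := ⟨ht.1.le.trans hη.1.le, hη.2.le⟩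
        have habs : |t - b| = b - t := by
          rw [abs_of_nonpos (sub_nonpos.2 ht.2.le)]; ring
        have hpow : (0:ℝ) < (b - t) ^ j / j ! := by
          have : (0:ℝ) < b - t := by linarith [ht.2]
          positivity
        have hfl : |Db b| / 2 * ((b - t) ^ j / j !) ≤ |f t| := by
          rw [hfeq, abs_div, abs_mul, abs_pow, habs, Nat.abs_cast, mul_div_assoc]
          refine mul_le_mul_of_nonneg_right ?_ (by positivity)
          refine (hballb ξ hξI ?_).le
          rw [Real.dist_eq, abs_of_nonpos (sub_nonpos.2 hξ.2.le)]
          have h1 : t < ξ := hξ.1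
          linarith
        have hul : |h t - f t| < |Db b| / 2 * ((b - t) ^ j / j !) := by
          have h1 : h t - f t = (h - f) t := rfl
          rw [h1, hueq, abs_div, abs_mul, abs_pow, habs, Nat.abs_cast, mul_div_assoc]
          refine mul_lt_mul_of_pos_right ?_ hpow
          exact lt_of_lt_of_le (hubound j hjk1 η hηI)
            (le_trans (min_le_left _ _) (min_le_right _ _))
        linarith
      · -- middle region
        have htI : t ∈ Icc a' b' := ⟨hta'.le, htb'.le⟩
        have h1 : |f t0| ≤ |f t| := hmin htI
        have h2 : |h t - f t| < ε := by
          have := hubound 0 (Nat.zero_le _) t (Ioo_subset_Icc_self ht)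
          simpa [iteratedDerivWithin_zero] using this
        exact lt_of_lt_of_le h2 ((min_le_right _ _).trans h1)
  intro h0
  rw [h0, zero_sub, abs_neg] at key
  exact lt_irrefl _ key
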